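/- For every real ε > 0 there exist an integer t ≥ 2 and an integer V ≥ 1 such that for every integer ν ≥ V, setting n = 2^ν − 1, p = (2t − 2 − 1/(t−1)!)/n, and R = 1 − 2νt/n, one has 0 < p < 1/2, 0 < R < 1, and (1 − C(p))/(1 − R) ≥ 1 − ε. -/

import Mathlib

set_option maxHeartbeats 1000000


open Filter

/-- Binary entropy function `H(p) = −p·log₂ p − (1−p)·log₂(1−p)`. -/
noncomputable def H (p : ℝ) : ℝ :=
  -p * Real.logb 2 p - (1 - p) * Real.logb 2 (1 - p)

/-- Capacity of the binary symmetric channel with crossover probability `p`. -/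
noncomputable def C (p : ℝ) : ℝ := 1 - H p

/-- Exponential beats linear. -/
lemma aux_lin_lt_pow (m ν : ℕ) (hm : 1 ≤ m) (hν : 4 * m ≤ ν) : m * ν < 2 ^ ν := by
  obtain ⟨j, rfl⟩ : ∃ j, ν = 2 * m + j := ⟨ν - 2 * m, by omega⟩
  have hj : 2 * m ≤ j := by omega
  have h1 : 2 * m + 1 ≤ 2 ^ (2 * m) := Nat.lt_two_pow_self
  have h2 : j + 1 ≤ 2 ^ j := Nat.lt_two_pow_self
  calc m * (2 * m + j) < (2 * m + 1) * (j + 1) := by nlinarith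
    _ ≤ 2 ^ (2 * m) * 2 ^ j := Nat.mul_le_mul h1 h2
    _ = 2 ^ (2 * m + j) := (pow_add 2 _ _).symm

/-- for every `ε > 0` there exist `t ≥ 2` and `V ≥ 1` such that for
all `ν ≥ V`, with `n = 2^ν − 1`, `p = (2t − 2 − 1/(t−1)!)/n` and `R = 1 − 2νt/n`,
one has `0 < p < 1/2`, `0 < R < 1`, and `(1 − C(p))/(1 − R) ≥ 1 − ε`. -/
theorem stmt13 (ε : ℝ) (hε : 0 < ε) :
    ∃ t : ℕ, 2 ≤ t ∧ ∃ V : ℕ, 1 ≤ V ∧ ∀ ν : ℕ, V ≤ ν →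
      (0 < (2 * (t : ℝ) - 2 - 1 / (Nat.factorial (t - 1) : ℝ)) / ((2 : ℝ) ^ ν - 1)) ∧
      ((2 * (t : ℝ) - 2 - 1 / (Nat.factorial (t - 1) : ℝ)) / ((2 : ℝ) ^ ν - 1) < 1 / 2) ∧
      (0 < 1 - 2 * (ν : ℝ) * (t : ℝ) / ((2 : ℝ) ^ ν - 1)) ∧
      (1 - 2 * (ν : ℝ) * (t : ℝ) / ((2 : ℝ) ^ ν - 1) < 1) ∧
      (1 - ε ≤
        (1 - C ((2 * (t : ℝ) - 2 - 1 / (Nat.factorial (t - 1) : ℝ)) / ((2 : ℝ) ^ ν - 1))) /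
          (1 - (1 - 2 * (ν : ℝ) * (t : ℝ) / ((2 : ℝ) ^ ν - 1)))) := by
  set ε' : ℝ := min ε 1 with hε'def
  have hε'0 : 0 < ε' := lt_min hε one_pos
  have hε'1 : ε' ≤ 1 := min_le_right _ _
  have hε'ε : ε' ≤ ε := min_le_left _ _
  clear_value ε'
  -- choose t
  refine ⟨max 2 ⌈6 / ε'⌉₊, le_max_left _ _, ?_⟩
  set t : ℕ := max 2 ⌈6 / ε'⌉₊ with htdef
  have ht2 : 2 ≤ t := le_max_left _ _
  have ht2R : (2 : ℝ) ≤ (t : ℝ) := by exact_mod_cast ht2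
  have ht0 : (0 : ℝ) ≤ (t : ℝ) := by linarith
  have ht6 : 6 / ε' ≤ (t : ℝ) :=
    le_trans (Nat.le_ceil _) (by exact_mod_cast le_max_right 2 ⌈6 / ε'⌉₊)
  have htε : 6 ≤ (t : ℝ) * ε' := by
    rw [div_le_iff₀ hε'0] at ht6; linarith
  clear_value t
  -- the constant a
  set a : ℝ := 2 * (t : ℝ) - 2 - 1 / (Nat.factorial (t - 1) : ℝ) with hadef
  have hfac1 : (1 : ℝ) ≤ (Nat.factorial (t - 1) : ℝ) := by
    exact_mod_cast Nat.one_le_iff_ne_zero.mpr (Nat.factorial_ne_zero _)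
  have hfacpos : (0 : ℝ) < (Nat.factorial (t - 1) : ℝ) := by linarith
  have hfrac0 : 0 < 1 / (Nat.factorial (t - 1) : ℝ) := by positivity
  have hfrac1 : 1 / (Nat.factorial (t - 1) : ℝ) ≤ 1 := by
    rw [div_le_one hfacpos]; exact hfac1
  have ha1 : (1 : ℝ) ≤ a := by rw [hadef]; linarith
  have ha0 : (0 : ℝ) < a := by linarith
  have ha2t : a ≤ 2 * (t : ℝ) := by rw [hadef]; linarith
  have ha_lb : 2 * (t : ℝ) * (1 - ε' / 4) ≤ a := by
    have h : 2 * (t : ℝ) * (1 - ε' / 4) = 2 * (t : ℝ) - (t : ℝ) * ε' / 2 := by ring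
    rw [hadef, h]; linarith [htε, hfrac1]
  clear_value a
  -- logb bound for a
  set L : ℝ := Real.logb 2 (2 * (t : ℝ)) with hLdef
  have hL0 : 0 ≤ L := by
    rw [hLdef]; exact Real.logb_nonneg one_lt_two (by linarith)
  have hlogba : Real.logb 2 a ≤ L := by
    rw [hLdef]; exact Real.logb_le_logb_of_le one_lt_two ha0 ha2t
  clear_value L
  -- choose V
  refine ⟨max (max 1 ⌈2 * (1 + L) / ε'⌉₊) (4 * (6 * t + 2)),
    le_trans (le_max_left 1 _) (le_max_left _ _), ?_⟩
  intro ν hν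
  have hν1 : 1 ≤ ν := le_trans (le_trans (le_max_left 1 _) (le_max_left _ _)) hν
  have hν1R : (1 : ℝ) ≤ (ν : ℝ) := by exact_mod_cast hν1
  have hν0 : (0 : ℝ) ≤ (ν : ℝ) := by linarith
  have hνD : 2 * (1 + L) / ε' ≤ (ν : ℝ) := by
    refine le_trans (Nat.le_ceil _) ?_
    exact_mod_cast le_trans (le_trans (le_max_right 1 _) (le_max_left _ _)) hν
  have hνL : 1 + L ≤ (ν : ℝ) * ε' / 2 := by
    rw [div_le_iff₀ hε'0] at hνD; linarith
  -- the exponential bound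
  have hexp : (6 * t + 2) * ν < 2 ^ ν :=
    aux_lin_lt_pow _ _ (by omega) (le_trans (le_max_right _ _) hν)
  have hexpR : ((6 * (t : ℝ) + 2) * (ν : ℝ)) < (2 : ℝ) ^ ν := by
    calc ((6 * (t : ℝ) + 2) * (ν : ℝ)) = (((6 * t + 2) * ν : ℕ) : ℝ) := by push_cast; ring
      _ < ((2 ^ ν : ℕ) : ℝ) := by exact_mod_cast hexp
      _ = (2 : ℝ) ^ ν := by push_cast; ring
  have htν : (t : ℝ) * 1 ≤ (t : ℝ) * (ν : ℝ) := mul_le_mul_of_nonneg_left hν1R ht0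
  have hkey : 2 * (ν : ℝ) * (t : ℝ) + 4 * (t : ℝ) + 2 < (2 : ℝ) ^ ν := by
    linarith [hexpR, htν, hν1R]
  set n : ℝ := (2 : ℝ) ^ ν - 1 with hndef
  have hkey' : 2 * (ν : ℝ) * (t : ℝ) + 4 * (t : ℝ) + 2 < n + 1 := by
    rw [hndef]; linarith
  clear_value n
  have hnt2 : (2 : ℝ) ≤ (ν : ℝ) * (t : ℝ) := le_trans ht2R (le_mul_of_one_le_left ht0 hν1R)
  have hn0 : 0 < n := by linarith
  have h2a : 2 * a < n := by linarith
  have hνt : 2 * (ν : ℝ) * (t : ℝ) < n := by linarith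
  have hνtpos : 0 < 2 * (ν : ℝ) * (t : ℝ) := by linarith
  set p : ℝ := a / n with hpdef
  clear_value p
  have hp0 : 0 < p := by rw [hpdef]; exact div_pos ha0 hn0
  have hp12 : p < 1 / 2 := by
    rw [hpdef, div_lt_div_iff₀ hn0 two_pos]; linarith
  have hD0 : 0 < 2 * (ν : ℝ) * (t : ℝ) / n := div_pos hνtpos hn0
  have hD1 : 2 * (ν : ℝ) * (t : ℝ) / n < 1 := (div_lt_one hn0).mpr hνt
  refine ⟨hp0, hp12, by linarith, by linarith, ?_⟩
  -- main inequality
  have hsimp : (1 - C p) = H p := by rw [C]; ring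
  have hden : (1 - (1 - 2 * (ν : ℝ) * (t : ℝ) / n)) = 2 * (ν : ℝ) * (t : ℝ) / n := by ring
  rw [hsimp, hden]
  have hp1 : p < 1 := by linarith
  have hlogp : Real.logb 2 p = Real.logb 2 a - Real.logb 2 n := by
    rw [hpdef]; exact Real.logb_div (ne_of_gt ha0) (ne_of_gt hn0)
  have hsecond : 0 ≤ -(1 - p) * Real.logb 2 (1 - p) := by
    have h1 : Real.logb 2 (1 - p) ≤ 0 :=
      Real.logb_nonpos one_lt_two (by linarith) (by linarith)
    have h2 : 0 ≤ (1 - p) * (-(Real.logb 2 (1 - p))) :=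
      mul_nonneg (by linarith) (by linarith)
    linarith [h2]
  have hlogn : (ν : ℝ) - 1 ≤ Real.logb 2 n := by
    have h1 : (2 : ℝ) ^ ν / 2 ≤ n := by
      have h2ν : (2 : ℝ) ^ 1 ≤ (2 : ℝ) ^ ν := pow_le_pow_right₀ one_le_two hν1
      norm_num at h2ν; rw [hndef]; linarith
    have h2 : Real.logb 2 ((2 : ℝ) ^ ν / 2) = (ν : ℝ) - 1 := by
      rw [Real.logb_div (by positivity) (by norm_num), Real.logb_pow,
        Real.logb_self_eq_one one_lt_two]
      ring
    calc (ν : ℝ) - 1 = Real.logb 2 ((2 : ℝ) ^ ν / 2) := h2.symm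
      _ ≤ Real.logb 2 n := Real.logb_le_logb_of_le one_lt_two (by positivity) (by linarith)
  have hHlb : a / n * ((ν : ℝ) - 1 - L) ≤ H p := by
    have h1 : a / n * ((ν : ℝ) - 1 - L) ≤ a / n * (Real.logb 2 n - Real.logb 2 a) := by
      apply mul_le_mul_of_nonneg_left _ (le_of_lt (div_pos ha0 hn0))
      linarith
    have h2 : -p * Real.logb 2 p = a / n * (Real.logb 2 n - Real.logb 2 a) := by
      rw [hlogp, hpdef]; ring
    rw [H]
    calc a / n * ((ν : ℝ) - 1 - L) ≤ a / n * (Real.logb 2 n - Real.logb 2 a) := h1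
      _ = -p * Real.logb 2 p := h2.symm
      _ ≤ -p * Real.logb 2 p + (-(1 - p) * Real.logb 2 (1 - p)) := by linarith
      _ = -p * Real.logb 2 p - (1 - p) * Real.logb 2 (1 - p) := by ring
  -- core arithmetic
  have hcore : (1 - ε') * (2 * (ν : ℝ) * (t : ℝ)) ≤ a * ((ν : ℝ) - 1 - L) := by
    have hνε : (ν : ℝ) * ε' ≤ (ν : ℝ) * 1 := mul_le_mul_of_nonneg_left hε'1 hν0
    have hν2 : (ν : ℝ) * (1 - ε' / 2) ≤ (ν : ℝ) - 1 - L := by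
      have : (ν : ℝ) * (1 - ε' / 2) = (ν : ℝ) - (ν : ℝ) * ε' / 2 := by ring
      linarith [hνL]
    have hν2nonneg : 0 ≤ (ν : ℝ) * (1 - ε' / 2) := by linarith [hνε, hν0]
    have hprod : (2 * (t : ℝ) * (1 - ε' / 4)) * ((ν : ℝ) * (1 - ε' / 2)) ≤
        a * ((ν : ℝ) - 1 - L) :=
      mul_le_mul ha_lb hν2 hν2nonneg (le_of_lt ha0)
    have h3 : 0 ≤ (t : ℝ) * (ν : ℝ) * ε' := mul_nonneg (mul_nonneg ht0 hν0) (le_of_lt hε'0)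
    have h4 : 0 ≤ (t : ℝ) * (ν : ℝ) * ε' ^ 2 := mul_nonneg (mul_nonneg ht0 hν0) (sq_nonneg ε')
    linarith [hprod, h3, h4]
  have hdiv : (1 - ε') * (2 * (ν : ℝ) * (t : ℝ) / n) ≤ a / n * ((ν : ℝ) - 1 - L) := by
    have e1 : (1 - ε') * (2 * (ν : ℝ) * (t : ℝ) / n) =
        ((1 - ε') * (2 * (ν : ℝ) * (t : ℝ))) / n := by ring
    have e2 : a / n * ((ν : ℝ) - 1 - L) = (a * ((ν : ℝ) - 1 - L)) / n := by ring
    rw [e1, e2]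
    exact (div_le_div_iff_of_pos_right hn0).mpr hcore
  calc 1 - ε ≤ 1 - ε' := by linarith
    _ ≤ H p / (2 * (ν : ℝ) * (t : ℝ) / n) := by
      rw [le_div_iff₀ hD0]
      linarith [hHlb, hdiv]
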